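/- Let R be a commutative noetherian local ring, a an ideal of R, S = R/a, and L a finitely generated R-module generated by μ elements. Then Fitt₀(L) + a^μ ⊆ Fitt₀(L ⊗_R S) ⊆ Fitt₀(L) + a, where Fitt₀ denotes the zeroth Fitting ideal over R. -/

import Mathlib

/-- The `j`-th Fitting ideal of a module `M`, defined intrinsically as the ideal generated by
all `(n-j)`-minors of matrices of relations coming from any surjection `R^n → M`.
(For finitely presented modules this agrees with the classical definition via a presentation
matrix, by invariance of Fitting ideals under change of presentation.) -/
noncomputable def fittingIdeal (R : Type*) [CommRing R] (M : Type*) [AddCommGroup M]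
    [Module R M] (j : ℕ) : Ideal R :=
  Ideal.span { r | ∃ (n : ℕ) (π : (Fin n → R) →ₗ[R] M), Function.Surjective π ∧
    ∃ v : Fin (n - j) → (Fin n → R), (∀ l, v l ∈ LinearMap.ker π) ∧
      ∃ rows : Fin (n - j) → Fin n,
        r = Matrix.det (Matrix.of fun p q : Fin (n - j) => v q (rows p)) }

/-- A power `a ^ μ` is contained in the span of products of `μ` elements of `a`. -/
lemma pow_le_span_prod {R : Type*} [CommRing R] (a : Ideal R) :
    ∀ μ : ℕ, a ^ μ ≤ Ideal.span {r | ∃ f : Fin μ → R, (∀ i, f i ∈ a) ∧ r = ∏ i, f i} := by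
  intro μ
  induction μ with
  | zero =>
      rw [pow_zero, Ideal.one_eq_top, top_le_iff, Ideal.eq_top_iff_one]
      exact Ideal.subset_span ⟨Fin.elim0, fun i => i.elim0, by simp⟩
  | succ k ih =>
      rw [pow_succ, mul_comm]
      refine Ideal.mul_le.mpr fun r hr s hsk => ?_
      have hs := ih hsk
      refine Submodule.span_induction ?_ ?_ ?_ ?_ hs
      · rintro x ⟨f, hf, rfl⟩
        refine Ideal.subset_span ⟨Fin.cons r f, ?_, ?_⟩
        · intro i
          refine Fin.cases ?_ ?_ i
          · simpa using hr
          · intro j; simpa using hf j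
        · rw [Fin.prod_cons]
      · simp
      · intro x y _ _ hx hy
        rw [mul_add]; exact Ideal.add_mem _ hx hy
      · intro c x _ hx
        have h : r * (c • x) = c • (r * x) := by
          simp only [smul_eq_mul]; ring
        rw [h]
        exact Submodule.smul_mem _ c hx

/-- Let `R` be a commutative noetherian local ring, `a` an ideal, `S = R/a`,
and `L` a finitely generated `R`-module generated by `μ` elements.  Then
`Fitt₀(L) + a^μ ⊆ Fitt₀(L ⊗_R S) ⊆ Fitt₀(L) + a`, where `L ⊗_R S = L/aL`. -/
theorem stmt0 (R : Type*) [CommRing R] [IsNoetherianRing R] [IsLocalRing R]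
    (a : Ideal R) (L : Type*) [AddCommGroup L] [Module R L] [Module.Finite R L]
    (μ : ℕ) (s : Fin μ → L) (hs : Submodule.span R (Set.range s) = ⊤) :
    fittingIdeal R L 0 + a ^ μ ≤
        fittingIdeal R (L ⧸ (a • (⊤ : Submodule R L))) 0 ∧
      fittingIdeal R (L ⧸ (a • (⊤ : Submodule R L))) 0 ≤ fittingIdeal R L 0 + a := by
  classical
  set N : Submodule R L := a • ⊤ with hN
  constructor
  · -- `Fitt₀(L) + a^μ ≤ Fitt₀(L/aL)`
    rw [Submodule.add_eq_sup]
    apply sup_le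
    · -- `Fitt₀(L) ≤ Fitt₀(L/aL)`
      rw [fittingIdeal, Ideal.span_le]
      rintro r ⟨n, π, hπ, v, hv, rows, rfl⟩
      refine Ideal.subset_span ⟨n, N.mkQ.comp π, (N.mkQ_surjective).comp hπ, v, ?_, rows, rfl⟩
      intro l
      rw [LinearMap.mem_ker, LinearMap.comp_apply, LinearMap.mem_ker.mp (hv l), map_zero]
    · -- `a^μ ≤ Fitt₀(L/aL)`
      refine le_trans (pow_le_span_prod a μ) ?_
      rw [Ideal.span_le]
      rintro r ⟨f, hf, rfl⟩
      set π : (Fin μ → R) →ₗ[R] (L ⧸ N) := N.mkQ.comp (Fintype.linearCombination R s) with hπ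
      have hsl : Function.Surjective (Fintype.linearCombination R s) := by
        rw [← LinearMap.range_eq_top, Fintype.range_linearCombination, hs]
      have hπs : Function.Surjective π := by
        rw [hπ, LinearMap.coe_comp]
        exact N.mkQ_surjective.comp hsl
      refine Ideal.subset_span ⟨μ, π, hπs, fun q => Pi.single q (f q), ?_, id, ?_⟩
      · intro q
        rw [LinearMap.mem_ker, hπ, LinearMap.comp_apply,
          Fintype.linearCombination_apply_single, Submodule.mkQ_apply,
          Submodule.Quotient.mk_eq_zero]
        exact Submodule.smul_mem_smul (hf q) trivial
      · show (∏ i, f i) =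
            Matrix.det (Matrix.of fun p q : Fin μ => (Pi.single q (f q) : Fin μ → R) (id p))
        have h : (Matrix.of fun p q : Fin μ => (Pi.single q (f q) : Fin μ → R) (id p)) =
            Matrix.diagonal f := by
          ext p q
          simp only [Matrix.of_apply, Pi.single_apply, Matrix.diagonal_apply, id]
          split_ifs with h1
          · subst h1; rfl
          · rfl
        rw [h, Matrix.det_diagonal]
  · -- `Fitt₀(L/aL) ≤ Fitt₀(L) + a`
    rw [Submodule.add_eq_sup]
    by_cases ha : a = ⊤
    · subst ha
      exact le_trans le_top le_sup_right
    have hjac : a ≤ Ideal.jacobson ⊥ := by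
      rw [IsLocalRing.jacobson_eq_maximalIdeal ⊥ bot_ne_top]
      exact IsLocalRing.le_maximalIdeal ha
    rw [fittingIdeal, Ideal.span_le]
    rintro r ⟨n, π, hπ, v, hv, rows, rfl⟩
    -- lift π to a map π' : R^n → L
    choose l hl using fun i : Fin n => N.mkQ_surjective (π (Pi.single i 1))
    set π' : (Fin n → R) →ₗ[R] L := Fintype.linearCombination R l with hπ'
    have hcomp : ∀ x, N.mkQ (π' x) = π x := by
      intro x
      rw [hπ', Fintype.linearCombination_apply, map_sum]
      have h1 : ∀ i, N.mkQ (x i • l i) = π (Pi.single i (x i)) := by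
        intro i
        have h2 : (Pi.single i (x i) : Fin n → R) = x i • (Pi.single i 1 : Fin n → R) := by
          ext j; simp [Pi.single_apply]
        rw [map_smul, hl i, h2, map_smul]
      rw [Finset.sum_congr rfl fun i _ => h1 i, ← map_sum]
      congr 1
      ext j
      simp [Pi.single_apply]
    -- π' is surjective by Nakayama
    have hsup : LinearMap.range π' ⊔ N = ⊤ := by
      rw [sup_comm, ← Submodule.map_mkQ_eq_top, ← LinearMap.range_comp]
      have h2 : N.mkQ ∘ₗ π' = π := LinearMap.ext hcomp
      rw [h2, LinearMap.range_eq_top.mpr hπ]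
    have hπ's : Function.Surjective π' := by
      rw [← LinearMap.range_eq_top]
      refine eq_top_iff.mpr (Submodule.le_of_le_smul_of_le_jacobson_bot
        (Module.finite_def.mp inferInstance) hjac ?_)
      rw [← hN]
      exact hsup.ge
    -- each π'(v q) lies in a•L = π'(a•R^n)
    have hmem : ∀ q, π' (v q) ∈ Submodule.map π' (a • (⊤ : Submodule R (Fin n → R))) := by
      intro q
      have h1 : π' (v q) ∈ N := by
        rw [← Submodule.ker_mkQ N, LinearMap.mem_ker, hcomp]
        exact LinearMap.mem_ker.mp (hv q)
      have h2 : N = Submodule.map π' (a • (⊤ : Submodule R (Fin n → R))) := by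
        rw [Submodule.map_smul'', Submodule.map_top, LinearMap.range_eq_top.mpr hπ's, hN]
      rwa [h2] at h1
    choose u hu hu' using hmem
    have hua : ∀ q j, u q j ∈ a := by
      intro q j
      have h3 : (a • (⊤ : Submodule R (Fin n → R))) ≤
          Submodule.pi Set.univ (fun _ => a) := by
        refine Submodule.smul_le.mpr fun c hc x _ => ?_
        intro i _
        exact Ideal.mul_mem_right _ _ hc
      exact h3 (hu q) j trivial
    -- the corrected relations
    set w : Fin (n - 0) → (Fin n → R) := fun q => v q - u q with hw
    have hker : ∀ q, w q ∈ LinearMap.ker π' := by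
      intro q
      rw [LinearMap.mem_ker, hw]
      simp only [map_sub]
      rw [hu' q, sub_self]
    have hdetW : Matrix.det (Matrix.of fun p q : Fin (n - 0) => w q (rows p)) ∈
        fittingIdeal R L 0 :=
      Ideal.subset_span ⟨n, π', hπ's, w, hker, rows, rfl⟩
    have hdiff : Matrix.det (Matrix.of fun p q : Fin (n - 0) => v q (rows p)) -
        Matrix.det (Matrix.of fun p q : Fin (n - 0) => w q (rows p)) ∈ a := by
      rw [← Ideal.Quotient.eq_zero_iff_mem, map_sub, sub_eq_zero,
        RingHom.map_det, RingHom.map_det]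
      congr 1
      ext p q
      simp only [RingHom.mapMatrix_apply, Matrix.map_apply, Matrix.of_apply, hw,
        Pi.sub_apply]
      rw [Ideal.Quotient.eq]
      simpa using hua q (rows p)
    have hsplit : Matrix.det (Matrix.of fun p q : Fin (n - 0) => v q (rows p)) =
        Matrix.det (Matrix.of fun p q : Fin (n - 0) => w q (rows p)) +
        (Matrix.det (Matrix.of fun p q : Fin (n - 0) => v q (rows p)) -
         Matrix.det (Matrix.of fun p q : Fin (n - 0) => w q (rows p))) := by ring
    rw [hsplit]
    exact Submodule.add_mem_sup hdetW hdiff
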